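/- Let x_k ∈ J_k = [(k-1)h, kh] for k = 1,…,N with h = L/N. Then for every φ ∈ H¹(0,L) one has ‖φ‖²_{L²(0,L)} ≤ 2 [ h ∑_{k=1}^N |φ(x_k)|² + h² ‖φ'‖²_{L²(0,L)} ]. -/

import Mathlib

open MeasureTheory Finset

/-- Cauchy–Schwarz: (∫ |f|)² ≤ m · ∫ f² on a set of measure m. -/
lemma cs_aux (s : Set ℝ) (f : ℝ → ℝ) (m : ℝ) (hm0 : 0 < m)
    (hm : volume s = ENNReal.ofReal m)
    (hf : IntegrableOn f s) (hf2 : IntegrableOn (fun x => f x ^ 2) s) :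
    (∫ x in s, |f x|) ^ 2 ≤ m * ∫ x in s, f x ^ 2 := by
  have hfin : volume s < ⊤ := by rw [hm]; exact ENNReal.ofReal_lt_top
  have hmeasr : (volume s).toReal = m := by rw [hm, ENNReal.toReal_ofReal hm0.le]
  obtain ⟨I, hI⟩ : ∃ I, (∫ x in s, |f x|) = I := ⟨_, rfl⟩
  obtain ⟨J, hJ⟩ : ∃ J, (∫ x in s, f x ^ 2) = J := ⟨_, rfl⟩
  rw [hI, hJ]
  have hconst : IntegrableOn (fun _ : ℝ => I ^ 2) s := integrableOn_const hfin.ne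
  have key : 0 ≤ ∫ x in s, (m * |f x| - I) ^ 2 := integral_nonneg fun x => sq_nonneg _
  have expand : ∫ x in s, (m * |f x| - I) ^ 2
      = m ^ 2 * J - 2 * m * I * I + I ^ 2 * m := by
    have h1 : ∀ x, (m * |f x| - I) ^ 2
        = m ^ 2 * f x ^ 2 - (2 * m * I) * |f x| + I ^ 2 := by
      intro x
      have : |f x| ^ 2 = f x ^ 2 := sq_abs _
      nlinarith [this]
    rw [integral_congr_ae (ae_of_all _ fun x => h1 x)]
    have i1 : Integrable (fun x => m ^ 2 * f x ^ 2) (volume.restrict s) := hf2.const_mul _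
    have i2 : Integrable (fun x => (2 * m * I) * |f x|) (volume.restrict s) :=
      (hf.abs).const_mul _
    have i3 : Integrable (fun x => m ^ 2 * f x ^ 2 - (2 * m * I) * |f x|)
        (volume.restrict s) := i1.sub i2
    rw [integral_add i3 hconst, integral_sub i1 i2,
      integral_const_mul, integral_const_mul, setIntegral_const]
    simp only [measureReal_def, hmeasr, smul_eq_mul, hI, hJ]
    ring
  nlinarith [key, expand]
lemma interval_bound (L : ℝ) (φ φ' : ℝ → ℝ)
    (hderiv : ∀ y ∈ Set.Icc (0:ℝ) L, HasDerivAt φ (φ' y) y)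
    (a b x0 : ℝ) (hab : a < b) (hsub : Set.Icc a b ⊆ Set.Icc 0 L)
    (hx0 : x0 ∈ Set.Icc a b)
    (hφ2 : IntegrableOn (fun y => φ y ^ 2) (Set.Ioc a b))
    (hφ'2 : IntegrableOn (fun y => φ' y ^ 2) (Set.Ioc a b)) :
    (∫ y in Set.Ioc a b, φ y ^ 2) ≤
      2 * (b - a) * (φ x0) ^ 2 + 2 * (b - a) ^ 2 * ∫ y in Set.Ioc a b, φ' y ^ 2 := by
  have hvol : volume (Set.Ioc a b) = ENNReal.ofReal (b - a) := Real.volume_Ioc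
  have hfin : volume (Set.Ioc a b) < ⊤ := by rw [hvol]; exact ENNReal.ofReal_lt_top
  have hmeasr : (volume (Set.Ioc a b)).toReal = b - a := by
    rw [hvol, ENNReal.toReal_ofReal (by linarith)]
  -- measurability of φ'
  have hdm : ∀ y ∈ Set.Ioc a b, deriv φ y = φ' y := fun y hy =>
    (hderiv y (hsub (Set.Ioc_subset_Icc_self hy))).deriv
  have hmeas' : AEStronglyMeasurable φ' (volume.restrict (Set.Ioc a b)) :=
    (measurable_deriv φ).aestronglyMeasurable.congr
      ((ae_restrict_iff' measurableSet_Ioc).2 (ae_of_all _ hdm))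
  -- integrability of φ'
  have hconst1 : IntegrableOn (fun _ : ℝ => (1:ℝ)) (Set.Ioc a b) :=
    integrableOn_const hfin.ne
  have hInt' : IntegrableOn φ' (Set.Ioc a b) := by
    have g1 : Integrable (fun y : ℝ => 1 + φ' y ^ 2) (volume.restrict (Set.Ioc a b)) :=
      hconst1.add hφ'2
    have g2 : Integrable (fun y : ℝ => (1 + φ' y ^ 2) / 2) (volume.restrict (Set.Ioc a b)) :=
      g1.div_const 2
    refine Integrable.mono' g2 hmeas' (ae_of_all _ fun y => ?_)
    rw [Real.norm_eq_abs]
    nlinarith [sq_nonneg (|φ' y| - 1), sq_abs (φ' y)]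
  obtain ⟨M, hM⟩ : ∃ M, (∫ y in Set.Ioc a b, |φ' y|) = M := ⟨_, rfl⟩
  obtain ⟨J, hJ⟩ : ∃ J, (∫ y in Set.Ioc a b, φ' y ^ 2) = J := ⟨_, rfl⟩
  have hJ0 : 0 ≤ J := hJ ▸ integral_nonneg fun y => sq_nonneg _
  have hcs : M ^ 2 ≤ (b - a) * J := by
    rw [← hM, ← hJ]
    exact cs_aux _ _ _ (by linarith) hvol hInt' hφ'2
  -- pointwise bound
  have hpt : ∀ y ∈ Set.Ioc a b, φ y ^ 2 ≤ 2 * φ x0 ^ 2 + 2 * M ^ 2 := by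
    intro y hy
    have hy' : y ∈ Set.Icc a b := Set.Ioc_subset_Icc_self hy
    have huIcc : Set.uIcc x0 y ⊆ Set.Icc a b := Set.uIcc_subset_Icc hx0 hy'
    have huIoc : Set.uIoc x0 y ⊆ Set.Ioc a b :=
      Set.Ioc_subset_Ioc (le_min hx0.1 hy'.1) (max_le hx0.2 hy'.2)
    have hint : IntervalIntegrable φ' volume x0 y :=
      intervalIntegrable_iff.2 (hInt'.mono_set huIoc)
    have hftc : ∫ t in x0..y, φ' t = φ y - φ x0 :=
      intervalIntegral.integral_eq_sub_of_hasDerivAt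
        (fun t ht => hderiv t (hsub (huIcc ht))) hint
    have hbd : |φ y - φ x0| ≤ M := by
      rw [← hftc, ← Real.norm_eq_abs]
      calc ‖∫ t in x0..y, φ' t‖ ≤ ∫ t in Set.uIoc x0 y, ‖φ' t‖ :=
            intervalIntegral.norm_integral_le_integral_norm_uIoc
        _ ≤ ∫ t in Set.Ioc a b, |φ' t| := by
            simp only [Real.norm_eq_abs]
            exact setIntegral_mono_set hInt'.abs (ae_of_all _ fun t => abs_nonneg _)
              (HasSubset.Subset.eventuallyLE huIoc)
        _ = M := hM
    obtain ⟨h1, h2⟩ := abs_le.1 hbd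
    nlinarith [sq_nonneg (φ x0 - (φ y - φ x0)),
      mul_nonneg (by linarith : (0:ℝ) ≤ M - (φ y - φ x0))
        (by linarith : (0:ℝ) ≤ M + (φ y - φ x0))]
  -- integrate the pointwise bound
  have hconst2 : IntegrableOn (fun _ : ℝ => 2 * φ x0 ^ 2 + 2 * M ^ 2) (Set.Ioc a b) :=
    integrableOn_const hfin.ne
  have hibd : (∫ y in Set.Ioc a b, φ y ^ 2)
      ≤ (b - a) * (2 * φ x0 ^ 2 + 2 * M ^ 2) := by
    calc (∫ y in Set.Ioc a b, φ y ^ 2)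
        ≤ ∫ _ in Set.Ioc a b, (2 * φ x0 ^ 2 + 2 * M ^ 2) :=
          setIntegral_mono_on hφ2 hconst2 measurableSet_Ioc hpt
      _ = (b - a) * (2 * φ x0 ^ 2 + 2 * M ^ 2) := by
          rw [setIntegral_const, measureReal_def, hmeasr, smul_eq_mul]
  rw [hJ]
  nlinarith [hibd, hcs]

/-- Lemma 4.1 (ii): nodal-values lower bound for the L² norm
  ‖φ‖² ≤ 2 [ h ∑ |φ(x_k)|² + h² ‖φ'‖² ]. -/
theorem nodal_norm_bound
    (L : ℝ) (hL : 0 < L) (N : ℕ) (hN : 0 < N)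
    (h : ℝ) (hh : h = L / N)
    (x : ℕ → ℝ)
    (hx : ∀ k ∈ Finset.Icc 1 N, x k ∈ Set.Icc (((k : ℝ) - 1) * h) ((k : ℝ) * h))
    (φ φ' : ℝ → ℝ)
    (hderiv : ∀ y ∈ Set.Icc (0:ℝ) L, HasDerivAt φ (φ' y) y)
    (hφ : IntegrableOn (fun y => (φ y) ^ 2) (Set.Ioo 0 L))
    (hφ' : IntegrableOn (fun y => (φ' y) ^ 2) (Set.Ioo 0 L)) :
    (∫ y in Set.Ioo (0:ℝ) L, (φ y) ^ 2) ≤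
      2 * (h * ∑ k ∈ Finset.Icc 1 N, (φ (x k)) ^ 2 +
        h ^ 2 * ∫ y in Set.Ioo (0:ℝ) L, (φ' y) ^ 2) := by
  have h0 : 0 < h := hh ▸ div_pos hL (Nat.cast_pos.2 hN)
  have hNL : (N : ℝ) * h = L := by rw [hh]; field_simp
  have hφ2 : IntegrableOn (fun y => (φ y) ^ 2) (Set.Ioc 0 L) :=
    (integrableOn_Ioc_iff_integrableOn_Ioo (by simp)).2 hφ
  have hφ'2 : IntegrableOn (fun y => (φ' y) ^ 2) (Set.Ioc 0 L) :=
    (integrableOn_Ioc_iff_integrableOn_Ioo (by simp)).2 hφ'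
  have hsubIoc : ∀ k < N, Set.Ioc ((k:ℝ) * h) (((k:ℝ) + 1) * h) ⊆ Set.Ioc 0 L := by
    intro k hk
    apply Set.Ioc_subset_Ioc
    · positivity
    · rw [← hNL]
      have : (k:ℝ) + 1 ≤ N := by exact_mod_cast Nat.succ_le_of_lt hk
      nlinarith
  have hsplit : ∀ (f : ℝ → ℝ), IntegrableOn f (Set.Ioc 0 L) →
      (∫ y in Set.Ioc (0:ℝ) L, f y)
        = ∑ k ∈ range N, ∫ y in Set.Ioc ((k:ℝ) * h) (((k:ℝ) + 1) * h), f y := by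
    intro f hf
    have hint : ∀ k < N, IntervalIntegrable f volume ((k:ℝ) * h) (((k:ℝ) + 1) * h) := by
      intro k hk
      rw [intervalIntegrable_iff_integrableOn_Ioc_of_le (by nlinarith)]
      exact hf.mono_set (hsubIoc k hk)
    have key := intervalIntegral.sum_integral_adjacent_intervals
      (a := fun k => (k:ℝ) * h) (μ := volume) (f := f) (n := N) ?_
    · have e0 : ((0:ℕ):ℝ) * h = 0 := by simp
      have eN : ((N:ℕ):ℝ) * h = L := hNL
      rw [e0, eN] at key
      rw [← intervalIntegral.integral_of_le hL.le, ← key]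
      refine Finset.sum_congr rfl fun k hk => ?_
      rw [intervalIntegral.integral_of_le (by push_cast; nlinarith)]
      push_cast
      ring_nf
    · intro k hk
      have := hint k hk
      push_cast at this ⊢
      convert this using 2 <;> ring
  -- per-interval bound
  have perk : ∀ k ∈ range N,
      (∫ y in Set.Ioc ((k:ℝ) * h) (((k:ℝ) + 1) * h), φ y ^ 2)
        ≤ 2 * h * (φ (x (k+1))) ^ 2
          + 2 * h ^ 2 * ∫ y in Set.Ioc ((k:ℝ) * h) (((k:ℝ) + 1) * h), φ' y ^ 2 := by
    intro k hk
    rw [Finset.mem_range] at hk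
    have hsubIcc : Set.Icc ((k:ℝ) * h) (((k:ℝ) + 1) * h) ⊆ Set.Icc 0 L := by
      apply Set.Icc_subset_Icc
      · positivity
      · rw [← hNL]
        have : (k:ℝ) + 1 ≤ N := by exact_mod_cast Nat.succ_le_of_lt hk
        nlinarith
    have hx0 : x (k+1) ∈ Set.Icc ((k:ℝ) * h) (((k:ℝ) + 1) * h) := by
      have := hx (k+1) (Finset.mem_Icc.2 ⟨Nat.succ_le_succ (Nat.zero_le _), hk⟩)
      push_cast at this
      convert this using 2 <;> ring
    have := interval_bound L φ φ' hderiv ((k:ℝ) * h) (((k:ℝ) + 1) * h) (x (k+1))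
      (by nlinarith) hsubIcc hx0 (hφ2.mono_set (hsubIoc k hk))
      (hφ'2.mono_set (hsubIoc k hk))
    have hba : ((k:ℝ) + 1) * h - (k:ℝ) * h = h := by ring
    rw [hba] at this
    linarith
  have hS : ∑ k ∈ range N, (φ (x (k+1))) ^ 2 = ∑ k ∈ Finset.Icc 1 N, (φ (x k)) ^ 2 := by
    rw [show Finset.Icc 1 N = Finset.Ico 1 (N+1) by rw [Finset.Ico_add_one_right_eq_Icc],
      Finset.sum_Ico_eq_sum_range]
    simp [add_comm]
  calc (∫ y in Set.Ioo (0:ℝ) L, (φ y) ^ 2)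
      = ∫ y in Set.Ioc (0:ℝ) L, (φ y) ^ 2 := (integral_Ioc_eq_integral_Ioo).symm
    _ = ∑ k ∈ range N, ∫ y in Set.Ioc ((k:ℝ) * h) (((k:ℝ) + 1) * h), φ y ^ 2 :=
        hsplit _ hφ2
    _ ≤ ∑ k ∈ range N, (2 * h * (φ (x (k+1))) ^ 2
          + 2 * h ^ 2 * ∫ y in Set.Ioc ((k:ℝ) * h) (((k:ℝ) + 1) * h), φ' y ^ 2) :=
        Finset.sum_le_sum perk
    _ = 2 * h * (∑ k ∈ range N, (φ (x (k+1))) ^ 2)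
          + 2 * h ^ 2 * ∑ k ∈ range N, ∫ y in Set.Ioc ((k:ℝ) * h) (((k:ℝ) + 1) * h), φ' y ^ 2 := by
        rw [Finset.sum_add_distrib, Finset.mul_sum, Finset.mul_sum]
    _ = 2 * h * (∑ k ∈ Finset.Icc 1 N, (φ (x k)) ^ 2)
          + 2 * h ^ 2 * ∫ y in Set.Ioo (0:ℝ) L, (φ' y) ^ 2 := by
        rw [hS, ← hsplit _ hφ'2, integral_Ioc_eq_integral_Ioo]
    _ = 2 * (h * ∑ k ∈ Finset.Icc 1 N, (φ (x k)) ^ 2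
          + h ^ 2 * ∫ y in Set.Ioo (0:ℝ) L, (φ' y) ^ 2) := by ring
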